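/- If the set function g(U) = max{ε, Σ_{j∈[k]} max_{i∈U} w_{i,j}} is submodular on 2^{[n]}, then Ī(ε) := {i ∈ [n] : Σ_{j∈[k]} w_{i,j} ≤ ε} is ε-negligible. -/

import Mathlib

/-- `g(U) = max{ε, Σ_{j∈[k]} max_{i∈U} w_{i,j}}`, with the convention that the max over
the empty set is `0`. -/
def gfun {n k : ℕ} (w : Fin n → Fin k → ℝ) (ε : ℝ) (U : Finset (Fin n)) : ℝ :=
  max ε (∑ j, U.fold max 0 (fun i => w i j))

/-- `Ī(ε) = {i ∈ [n] : Σ_j w_{i,j} ≤ ε}`. -/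
noncomputable def Ibar {n k : ℕ} (w : Fin n → Fin k → ℝ) (ε : ℝ) : Finset (Fin n) :=
  Finset.univ.filter (fun i => ∑ j, w i j ≤ ε)

/-- `Ī(ε)` is `ε`-negligible: either `Ī(ε) = ∅`, or both
(C1) `max_{i∈Ī(ε)} w_{i,j} ≤ w_{i',j}` for every `i' ∉ Ī(ε)` and every `j`, and
(C2) `Σ_j max_{i∈Ī(ε)} w_{i,j} ≤ ε`. -/
def epsNegligible {n k : ℕ} (w : Fin n → Fin k → ℝ) (ε : ℝ) : Prop :=
  Ibar w ε = ∅ ∨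
    ((∀ i' ∉ Ibar w ε, ∀ j, (Ibar w ε).fold max 0 (fun i => w i j) ≤ w i' j) ∧
      ∑ j, (Ibar w ε).fold max 0 (fun i => w i j) ≤ ε)

/-- If `g` is submodular, then `Ī(ε)` is `ε`-negligible. -/
theorem stmt_10 (n k : ℕ) (w : Fin n → Fin k → ℝ) (ε : ℝ)
    (hw : ∀ i j, 0 ≤ w i j) (hε : 0 ≤ ε)
    (hsub : ∀ A B : Finset (Fin n),
      gfun w ε A + gfun w ε B ≥ gfun w ε (A ∪ B) + gfun w ε (A ∩ B)) :
    epsNegligible w ε := by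
  classical
  by_cases hS : Ibar w ε = ∅
  · exact Or.inl hS
  refine Or.inr ?_
  have hmemS : ∀ i, i ∈ Ibar w ε ↔ ∑ j, w i j ≤ ε := by
    intro i; simp [Ibar]
  have hg_empty : gfun w ε ∅ = ε := by
    simp [gfun, hε]
  have hg_single : ∀ i ∈ Ibar w ε, gfun w ε {i} = ε := by
    intro i hi
    have h1 : ∀ j, ({i} : Finset (Fin n)).fold max 0 (fun i' => w i' j) = w i j := by
      intro j; simp [Finset.fold_singleton, max_eq_left (hw i j)]
    unfold gfun
    simp only [h1]
    exact max_eq_left ((hmemS i).1 hi)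
  -- C2 via induction
  have key : ∀ T : Finset (Fin n), T ⊆ Ibar w ε → gfun w ε T ≤ ε := by
    intro T
    induction T using Finset.induction_on with
    | empty => intro _; simp [hg_empty]
    | @insert a T ha ih =>
      intro hsub'
      have haS : a ∈ Ibar w ε := hsub' (Finset.mem_insert_self a T)
      have hTS : T ⊆ Ibar w ε := fun x hx => hsub' (Finset.mem_insert_of_mem hx)
      have h := hsub T {a}
      have hcap : T ∩ {a} = ∅ := by
        ext x; simp only [Finset.mem_inter, Finset.mem_singleton, Finset.notMem_empty,
          iff_false, not_and]
        intro hx hxa; exact ha (hxa ▸ hx)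
      have hunion : T ∪ {a} = insert a T := by
        ext x; simp [or_comm, Finset.insert_eq, -Finset.singleton_union]
      rw [hcap, hunion, hg_empty, hg_single a haS] at h
      linarith [ih hTS]
  have hC2 : ∑ j, (Ibar w ε).fold max 0 (fun i => w i j) ≤ ε :=
    le_trans (le_max_right ε _) (key _ le_rfl)
  refine ⟨?_, hC2⟩
  intro i' hi' j
  rw [Finset.fold_max_le]
  refine ⟨hw i' j, fun i hi => ?_⟩
  have hii' : i ≠ i' := fun h => hi' (h ▸ hi)
  have hε' : ε < ∑ j', w i' j' := lt_of_not_ge (by simpa [hmemS] using hi')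
  have h := hsub {i} {i'}
  have hcap : ({i} : Finset (Fin n)) ∩ {i'} = ∅ := by
    simp [Finset.singleton_inter_of_notMem, hii']
  have hfold : ∀ j', (({i} : Finset (Fin n)) ∪ {i'}).fold max 0 (fun x => w x j')
      = max (w i j') (w i' j') := by
    intro j'
    have hins : ({i} : Finset (Fin n)) ∪ {i'} = insert i {i'} := by
      exact (Finset.insert_eq i {i'}).symm
    rw [hins, Finset.fold_insert (by simp [hii']), Finset.fold_singleton,
      max_eq_left (hw i' j')]
  have hgi' : gfun w ε {i'} = ∑ j', w i' j' := by
    have h1 : ∀ j', ({i'} : Finset (Fin n)).fold max 0 (fun x => w x j') = w i' j' := by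
      intro j'; simp [Finset.fold_singleton, max_eq_left (hw i' j')]
    unfold gfun
    simp only [h1]
    exact max_eq_right (le_of_lt hε')
  rw [hcap, hg_empty, hg_single i hi, hgi'] at h
  have hlow : ∑ j', max (w i j') (w i' j') ≤ gfun w ε ({i} ∪ {i'}) := by
    unfold gfun
    simp only [hfold]
    exact le_max_right _ _
  have h2 : ∑ j', max (w i j') (w i' j') ≤ ∑ j', w i' j' := by linarith
  have hle : ∀ j' ∈ (Finset.univ : Finset (Fin k)), w i' j' ≤ max (w i j') (w i' j') :=
    fun j' _ => le_max_right _ _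
  have heq : ∑ j', w i' j' = ∑ j', max (w i j') (w i' j') :=
    le_antisymm (Finset.sum_le_sum hle) h2
  have hall := (Finset.sum_eq_sum_iff_of_le hle).1 heq j (Finset.mem_univ j)
  calc w i j ≤ max (w i j) (w i' j) := le_max_left _ _
    _ = w i' j := hall.symm
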